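/- Define φ on ordinals of the form ν + κ_α·δ + χ with χ < κ_α by φ(ν + κ_α·δ + χ) = α·δ + index(χ), where index(χ) is the unique γ with κ_γ ≤ χ < κ_{γ+1} (and index(0) = 0). Then φ is weakly order preserving: if ν ≤ σ ≤ τ then φ(σ) ≤ φ(τ). -/

import Mathlib

open Ordinal

/-- φ defined by φ(ν + κ_α·δ + χ) = α·δ + index(χ) (χ < κ_α) is weakly order
preserving: if ν ≤ σ ≤ τ (within the domain) then φ(σ) ≤ φ(τ). -/
theorem stmt6 (κ : Ordinal → Ordinal) (α ν lam : Ordinal)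
    (index : Ordinal → Ordinal) (φ : Ordinal → Ordinal)
    (hκ : Order.IsNormal κ) (h0 : κ 0 = 0)
    (hind : ∀ β γ : Ordinal, β < κ α → γ < κ α → β + γ < κ α)
    (hν : ∃ ξ, ν = κ α * ξ)
    (hidx0 : index 0 = 0)
    (hidx : ∀ χ : Ordinal, 0 < χ → χ < κ α →
      index χ < α ∧ κ (index χ) ≤ χ ∧ χ < κ (index χ + 1))
    (hφ : ∀ δ χ : Ordinal, χ < κ α → φ (ν + κ α * δ + χ) = α * δ + index χ) :
    ∀ σ τ : Ordinal, ν ≤ σ → σ ≤ τ → τ < ν + κ α * lam → φ σ ≤ φ τ := by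
  intro σ τ hνσ hστ hτ
  -- κ α ≠ 0
  rcases eq_or_ne (κ α) 0 with hk0 | hk0
  · exfalso
    rw [hk0, zero_mul, add_zero] at hτ
    exact absurd (hνσ.trans hστ) (not_le.2 hτ)
  have hkpos : 0 < κ α := pos_iff_ne_zero.2 hk0
  have hα : 0 < α := by
    by_contra h
    push_neg at h
    have : α = 0 := le_antisymm h zero_le
    rw [this, h0] at hk0; exact hk0 rfl
  -- index bounds
  have hidxlt : ∀ χ, χ < κ α → index χ < α := by
    intro χ hχ
    rcases eq_or_ne χ 0 with rfl | h
    · rwa [hidx0]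
    · exact (hidx χ (pos_iff_ne_zero.2 h) hχ).1
  have hidxmono : ∀ χ1 χ2, χ1 ≤ χ2 → χ1 < κ α → χ2 < κ α → index χ1 ≤ index χ2 := by
    intro χ1 χ2 h12 h1 h2
    rcases eq_or_ne χ1 0 with rfl | hne
    · rw [hidx0]; exact zero_le
    have hp1 : 0 < χ1 := pos_iff_ne_zero.2 hne
    have hp2 : 0 < χ2 := lt_of_lt_of_le hp1 h12
    obtain ⟨-, hl1, -⟩ := hidx χ1 hp1 h1
    obtain ⟨-, -, hu2⟩ := hidx χ2 hp2 h2
    by_contra h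
    push_neg at h
    have : index χ2 + 1 ≤ index χ1 := Order.succ_le_of_lt h
    have : κ (index χ2 + 1) ≤ κ (index χ1) := hκ.monotone this
    exact absurd (this.trans_lt ((hl1.trans h12).trans_lt hu2)) (lt_irrefl _)
  -- decompose σ and τ
  have decomp : ∀ ρ, ν ≤ ρ → ∃ δ χ, χ < κ α ∧ ρ = ν + κ α * δ + χ := by
    intro ρ hρ
    refine ⟨(ρ - ν) / κ α, (ρ - ν) % κ α, Ordinal.mod_lt _ hk0, ?_⟩
    rw [add_assoc, Ordinal.div_add_mod, Ordinal.add_sub_cancel_of_le hρ]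
  obtain ⟨δ1, χ1, hχ1, hσ⟩ := decomp σ hνσ
  obtain ⟨δ2, χ2, hχ2, hτd⟩ := decomp τ (hνσ.trans hστ)
  rw [hσ, hφ δ1 χ1 hχ1, hτd, hφ δ2 χ2 hχ2]
  -- compare δ1 δ2
  have hle : κ α * δ1 + χ1 ≤ κ α * δ2 + χ2 := by
    have := hστ; rw [hσ, hτd, add_assoc, add_assoc] at this
    exact (add_le_add_iff_left ν).1 this
  have hδ : δ1 ≤ δ2 := by
    by_contra h
    push_neg at h
    have h1 : κ α * δ2 + χ2 < κ α * (δ2 + 1) := by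
      rw [mul_add, mul_one]; exact (add_lt_add_iff_left _).2 hχ2
    have h2 : κ α * (δ2 + 1) ≤ κ α * δ1 := by
      apply mul_le_mul_right; exact Order.succ_le_of_lt h
    have := (h1.trans_le h2).trans_le (le_self_add (b := χ1))
    exact absurd hle (not_le.2 this)
  rcases lt_or_eq_of_le hδ with hδlt | rfl
  · have h1 : α * δ1 + index χ1 < α * (δ1 + 1) := by
      rw [mul_add, mul_one]; exact (add_lt_add_iff_left _).2 (hidxlt χ1 hχ1)
    have h2 : α * (δ1 + 1) ≤ α * δ2 := mul_le_mul_right (Order.succ_le_of_lt hδlt) _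
    exact (h1.trans_le (h2.trans le_self_add)).le
  · have hχ : χ1 ≤ χ2 := (add_le_add_iff_left (κ α * δ1)).1 hle
    exact (add_le_add_iff_left _).2 (hidxmono χ1 χ2 hχ hχ1 hχ2)
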